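/- Let N and d be positive integers with d ∣ 24 and d² ∣ N. Then for every γ = [[a,b],[c,e]] ∈ SL₂(ℤ) with N ∣ c, the matrix [[1, 1/d],[0,1]]·γ·[[1, −1/d],[0,1]] = [[a + c/d, b + (e−a)/d − c/d²],[c, e − c/d]] has integer entries, determinant 1, and lower-left entry divisible by N. In particular conjugation by S_d = [[1,1/d],[0,1]] maps Γ₀(N) into Γ₀(N). -/

import Mathlib

lemma zmod_div24_sq (d : ℕ) (hd : d ∣ 24) : ∀ x y : ZMod d, x * y = 1 → x = y := by
  have h1 : 0 < d := Nat.pos_of_dvd_of_pos hd (by norm_num)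
  have h2 : d ≤ 24 := Nat.le_of_dvd (by norm_num) hd
  interval_cases d <;> first
    | (exfalso; revert hd; decide)
    | decide

/-- For `d ∣ 24` with `d² ∣ N` and `γ = [[a,b],[c,e]] ∈ Γ₀(N)`, the conjugate
`S_d·γ·S_d⁻¹`, where `S_d = [[1,1/d],[0,1]]`, equals
`[[a + c/d, b + (e−a)/d − c/d²],[c, e − c/d]]`, has integer entries,
determinant `1`, and lower-left entry divisible by `N`. -/
theorem S_d_normalizes (N d : ℕ) (hN : 0 < N) (hd24 : d ∣ 24) (hd2 : d ^ 2 ∣ N)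
    (a b c e : ℤ) (hdet : a * e - b * c = 1) (hc : (N : ℤ) ∣ c) :
    let S : Matrix (Fin 2) (Fin 2) ℚ := !![1, 1 / (d : ℚ); 0, 1]
    let S' : Matrix (Fin 2) (Fin 2) ℚ := !![1, -(1 / (d : ℚ)); 0, 1]
    let γ' : Matrix (Fin 2) (Fin 2) ℚ :=
      S * (!![(a : ℚ), b; c, e]) * S'
    γ' = !![(a : ℚ) + c / d, (b : ℚ) + (e - a) / d - c / d ^ 2;
            (c : ℚ), (e : ℚ) - c / d] ∧
    (∀ i j, ∃ z : ℤ, γ' i j = (z : ℚ)) ∧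
    γ'.det = 1 ∧
    (∃ z : ℤ, γ' 1 0 = (N : ℚ) * z) := by
  intro S S' γ'
  have hd0 : d ≠ 0 := by rintro rfl; exact absurd hd24 (by decide)
  have hdQ : (d : ℚ) ≠ 0 := by exact_mod_cast hd0
  -- d^2 divides c
  obtain ⟨k, hk⟩ : ((d : ℤ)) ^ 2 ∣ c := by
    refine dvd_trans ?_ hc
    exact_mod_cast Int.natCast_dvd_natCast.mpr hd2
  -- d divides c
  have hdc : (d : ℤ) ∣ c := ⟨d * k, by rw [hk]; ring⟩
  -- d divides a*e - 1
  have hdae : (d : ℤ) ∣ a * e - 1 := by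
    have : a * e - 1 = b * c := by linarith
    rw [this]
    exact Dvd.dvd.mul_left hdc b
  -- d divides e - a
  obtain ⟨m, hm⟩ : (d : ℤ) ∣ e - a := by
    have h1 : ((a : ZMod d)) * ((e : ZMod d)) = 1 := by
      have := (ZMod.intCast_zmod_eq_zero_iff_dvd (a * e - 1) d).mpr hdae
      push_cast at this
      linear_combination this
    have h2 : (a : ZMod d) = (e : ZMod d) := zmod_div24_sq d hd24 _ _ h1
    have h3 : ((e - a : ℤ) : ZMod d) = 0 := by push_cast [h2]; ring
    exact (ZMod.intCast_zmod_eq_zero_iff_dvd _ d).mp h3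
  have heq : γ' = !![(a : ℚ) + c / d, (b : ℚ) + (e - a) / d - c / d ^ 2;
            (c : ℚ), (e : ℚ) - c / d] := by
    show S * (!![(a : ℚ), b; c, e]) * S' = _
    ext i j
    fin_cases i <;> fin_cases j <;>
      simp [S, S', Matrix.mul_apply, Fin.sum_univ_succ] <;>
      field_simp <;> ring
  refine ⟨heq, ?_, ?_, ?_⟩
  · intro i j
    rw [heq]
    fin_cases i <;> fin_cases j
    all_goals simp only [Matrix.of_apply, Matrix.cons_val', Matrix.cons_val_zero, Matrix.cons_val_one, Matrix.empty_val', Matrix.cons_val_fin_one, Matrix.head_cons]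
    · exact ⟨a + d * k, by push_cast [hk]; field_simp; try ring⟩
    · refine ⟨b + m - k, ?_⟩
      have hmQ : (e : ℚ) - a = d * m := by exact_mod_cast congrArg (Int.cast : ℤ → ℚ) hm
      have hkQ : (c : ℚ) = d ^ 2 * k := by exact_mod_cast congrArg (Int.cast : ℤ → ℚ) hk
      push_cast
      rw [hmQ, hkQ]
      field_simp; try ring
    · exact ⟨c, by simp⟩
    · refine ⟨e - d * k, ?_⟩
      have hkQ : (c : ℚ) = d ^ 2 * k := by exact_mod_cast congrArg (Int.cast : ℤ → ℚ) hk
      push_cast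
      rw [hkQ]
      field_simp; try ring
  · rw [heq]
    have hdetQ : (a : ℚ) * e - b * c = 1 := by exact_mod_cast congrArg (Int.cast : ℤ → ℚ) hdet
    rw [Matrix.det_fin_two_of]
    field_simp; try ring
    linear_combination (d : ℚ) ^ 2 * hdetQ
  · obtain ⟨z, hz⟩ := hc
    refine ⟨z, ?_⟩
    rw [heq]
    simp
    exact_mod_cast congrArg (Int.cast : ℤ → ℚ) hz
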